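/- arXiv:1607.04676 — 2 statements merged into one kernel-verified Lean document; each statement's English description precedes it below -/
import Mathlib

section
/- Let $n\ge1$. For a strictly upper triangular real $n\times n$ matrix $X$ (i.e. $X_{ij}=0$ for $i\ge j$), the matrix $A(X)=(I+X)^{\top}(I+X)$ is symmetric positive definite; let $\lambda_1(X),\dots,\lambda_n(X)>0$ denote its eigenvalues counted with multiplicity. Then, as $X\to0$, $\sum_{i=1}^{n}\big(\log\lambda_i(X)\big)^2\ =\ 2\,\|X\|_F^2\ +\ O\big(\|X\|_F^3\big)$. -/
open Real Matrix

lemma scalar_log_bound {u : ℝ} (hu : |u| ≤ 1/2) :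
    |Real.log (1 + u) ^ 2 - u ^ 2| ≤ 6 * |u| ^ 3 := by
  have hx : |(-u)| < 1 := by rw [abs_neg]; linarith
  have h := Real.abs_log_sub_add_sum_range_le hx 1
  simp only [Finset.sum_range_one, pow_one, Nat.cast_zero, zero_add, div_one] at h
  rw [abs_neg, sub_neg_eq_add] at h
  have h1 : |Real.log (1 + u) - u| ≤ 2 * u ^ 2 := by
    have hb : |u| ^ 2 / (1 - |u|) ≤ 2 * u ^ 2 := by
      rw [div_le_iff₀ (by linarith)]
      have : |u|^2 = u^2 := sq_abs u
      nlinarith [sq_nonneg u, abs_nonneg u]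
    have he : -u + Real.log (1+u) = Real.log (1+u) - u := by ring
    calc |Real.log (1+u) - u| = |-u + Real.log (1+u)| := by rw [he]
      _ ≤ |u|^(1+1) / (1 - |u|) := h
      _ = |u|^2 / (1-|u|) := by norm_num
      _ ≤ 2 * u^2 := hb
  have h2 : |Real.log (1 + u) + u| ≤ 3 * |u| := by
    have hsplit : |Real.log (1+u) + u| ≤ |Real.log (1+u) - u| + |2*u| := by
      have : Real.log (1+u) + u = (Real.log (1+u) - u) + 2*u := by ring
      rw [this]; exact abs_add_le _ _
    have h2u : |2*u| = 2*|u| := by rw [abs_mul]; norm_num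
    nlinarith [sq_abs u, abs_nonneg u]
  calc |Real.log (1+u)^2 - u^2| = |Real.log (1+u) - u| * |Real.log (1+u) + u| := by
        rw [← abs_mul]; ring_nf
    _ ≤ (2*u^2) * (3*|u|) := mul_le_mul h1 h2 (abs_nonneg _) (by positivity)
    _ = 6 * |u|^3 := by rw [← sq_abs u]; ring

lemma trace_sub_one_sq {n : ℕ} (A : Matrix (Fin n) (Fin n) ℝ) (hA : A.IsHermitian) :
    Matrix.trace ((A - 1) * (A - 1)) = ∑ i, (hA.eigenvalues i - 1) ^ 2 := by
  set U : Matrix (Fin n) (Fin n) ℝ := (hA.eigenvectorUnitary : Matrix (Fin n) (Fin n) ℝ) with hU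
  have hUU : U * star U = 1 := (Matrix.mem_unitaryGroup_iff).mp hA.eigenvectorUnitary.2
  have hUU' : star U * U = 1 := (Matrix.mem_unitaryGroup_iff').mp hA.eigenvectorUnitary.2
  have hdiag : star U * A * U = diagonal hA.eigenvalues := by
    have := hA.conjStarAlgAut_star_eigenvectorUnitary
    simpa [Unitary.conjStarAlgAut_star_apply, Function.comp_def, Matrix.mul_assoc] using this
  have hM : star U * (A - 1) * U = diagonal (fun i => hA.eigenvalues i - 1) := by
    rw [mul_sub, sub_mul, hdiag, mul_one, hUU']
    ext i j
    by_cases h : i = j <;> simp [Matrix.diagonal_apply, Matrix.one_apply, h, Matrix.sub_apply]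
  have hAU : A - 1 = U * diagonal (fun i => hA.eigenvalues i - 1) * star U := by
    rw [← hM]
    calc A - 1 = (U * star U) * (A - 1) * (U * star U) := by rw [hUU]; simp
      _ = U * (star U * (A - 1) * U) * star U := by simp only [Matrix.mul_assoc]
  have key : (A - 1) * (A - 1) =
      U * (diagonal (fun i => hA.eigenvalues i - 1) * diagonal (fun i => hA.eigenvalues i - 1)) * star U := by
    rw [hAU]
    calc (U * diagonal (fun i => hA.eigenvalues i - 1) * star U) * (U * diagonal (fun i => hA.eigenvalues i - 1) * star U)
        = U * (diagonal (fun i => hA.eigenvalues i - 1) * ((star U * U) * diagonal (fun i => hA.eigenvalues i - 1))) * star U := by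
          simp only [Matrix.mul_assoc]
      _ = _ := by rw [hUU']; simp only [Matrix.one_mul]
  rw [key, Matrix.trace_mul_comm, ← Matrix.mul_assoc, hUU', Matrix.one_mul,
    Matrix.diagonal_mul_diagonal, Matrix.trace_diagonal]
  exact Finset.sum_congr rfl fun i _ => (sq _).symm

lemma posdef_aux {n : ℕ} (X : Matrix (Fin n) (Fin n) ℝ)
    (hX : ∀ i j : Fin n, (j : ℕ) ≤ (i : ℕ) → X i j = 0) :
    ((1 + X)ᵀ * (1 + X)).PosDef := by
  have hdet : (1 + X).det = 1 := by
    have hbt : (1 + X).BlockTriangular id := by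
      intro i j hij
      simp only [Matrix.add_apply, Matrix.one_apply]
      rw [if_neg (by exact fun h => absurd h (by simp at hij ⊢; omega)), hX i j (le_of_lt hij)]
      simp
    rw [Matrix.det_of_upperTriangular hbt]
    have : ∀ i, (1 + X) i i = 1 := fun i => by
      simp [Matrix.add_apply, Matrix.one_apply, hX i i le_rfl]
    simp [this]
  have hinj : Function.Injective ((1 + X).mulVec) :=
    Matrix.mulVec_injective_iff_isUnit.mpr (Matrix.isUnit_iff_isUnit_det _ |>.mpr (by simp [hdet]))
  refine Matrix.PosDef.of_dotProduct_mulVec_pos (by have h := Matrix.isHermitian_conjTranspose_mul_self (1 + X); rwa [Matrix.conjTranspose_eq_transpose_of_trivial] at h) fun x hx => ?_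
  have hy : (1 + X) *ᵥ x ≠ 0 := fun h => hx (hinj (by simp [h]))
  have hdp : star x ⬝ᵥ (((1 + X)ᵀ * (1 + X)) *ᵥ x) = ((1 + X) *ᵥ x) ⬝ᵥ ((1 + X) *ᵥ x) := by
    rw [← Matrix.mulVec_mulVec, Matrix.dotProduct_mulVec, Matrix.vecMul_transpose]
    simp [dotProduct]
  rw [hdp]
  obtain ⟨i, hi⟩ := Function.ne_iff.mp hy
  exact Finset.sum_pos' (fun j _ => mul_self_nonneg _) ⟨i, Finset.mem_univ i, mul_self_pos.mpr hi⟩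

lemma final_est {n : ℕ} (lam : Fin n → ℝ) (S t s C₁ : ℝ)
    (hs0 : 0 ≤ s) (hst : s^2 = t) (hC₁0 : 0 ≤ C₁) (hsC : C₁ * s ≤ 1) (hs14 : s ≤ 1/4)
    (hSdef : S = ∑ i, (lam i - 1)^2)
    (hkey : |S - 2*t| ≤ C₁ * s^3) :
    |(∑ i, Real.log (lam i)^2) - 2*t| ≤ (C₁ + 36) * s^3 := by
  have hS0 : 0 ≤ S := hSdef ▸ Finset.sum_nonneg fun i _ => sq_nonneg _
  -- S ≤ 3 s^2
  have hS3 : S ≤ 3 * s^2 := by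
    have : S - 2*t ≤ C₁ * s^3 := le_of_abs_le hkey
    have hc : C₁ * s^3 ≤ s^2 := by
      nlinarith [mul_le_mul_of_nonneg_right hsC (sq_nonneg s)]
    nlinarith [hst]
  -- each eigenvalue close to 1
  have heig : ∀ i, |lam i - 1| ≤ 2 * s := by
    intro i
    have h1 : (lam i - 1)^2 ≤ S := by
      rw [hSdef]
      exact Finset.single_le_sum (f := fun i => (lam i - 1)^2)
        (fun j _ => sq_nonneg _) (Finset.mem_univ i)
    have h2 : (lam i - 1)^2 ≤ (2*s)^2 := by nlinarith
    calc |lam i - 1| = Real.sqrt ((lam i - 1)^2) :=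
          (Real.sqrt_sq_eq_abs _).symm
      _ ≤ Real.sqrt ((2*s)^2) := Real.sqrt_le_sqrt h2
      _ = 2*s := Real.sqrt_sq (by linarith [hs0])
  -- log bound per eigenvalue
  have hlog : ∀ i, |Real.log (lam i)^2 - (lam i - 1)^2|
      ≤ 12 * s * (lam i - 1)^2 := by
    intro i
    set u := lam i - 1 with hu
    have hu12 : |u| ≤ 1/2 := by
      have := heig i; rw [← hu] at this; linarith
    have h1u : 1 + u = lam i := by rw [hu]; ring
    have := scalar_log_bound hu12
    rw [h1u] at this
    calc |Real.log (lam i)^2 - u^2| ≤ 6 * |u|^3 := this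
      _ = 6 * |u| * |u|^2 := by ring
      _ ≤ 6 * (2*s) * |u|^2 := by
          have h2 : |u| ≤ 2*s := by have := heig i; rw [← hu] at this; exact this
          have : (0:ℝ) ≤ |u|^2 := sq_nonneg _
          nlinarith [abs_nonneg u]
      _ = 12 * s * u^2 := by rw [sq_abs]; ring
  -- assemble
  have hsum : |(∑ i, Real.log (lam i)^2) - S| ≤ 12 * s * S := by
    rw [hSdef, ← Finset.sum_sub_distrib]
    calc |∑ i, (Real.log (lam i)^2 - (lam i - 1)^2)|
        ≤ ∑ i, |Real.log (lam i)^2 - (lam i - 1)^2| :=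
          Finset.abs_sum_le_sum_abs _ _
      _ ≤ ∑ i, 12 * s * (lam i - 1)^2 := Finset.sum_le_sum fun i _ => hlog i
      _ = 12 * s * ∑ i, (lam i - 1)^2 := by rw [Finset.mul_sum]
  have hfinal : |(∑ i, Real.log (lam i)^2) - 2*t| ≤ (C₁ + 36) * s^3 := by
    have htri : |(∑ i, Real.log (lam i)^2) - 2*t|
        ≤ |(∑ i, Real.log (lam i)^2) - S| + |S - 2*t| := by
      have : (∑ i, Real.log (lam i)^2) - 2*t
          = ((∑ i, Real.log (lam i)^2) - S) + (S - 2*t) := by ring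
      rw [this]; exact abs_add_le _ _
    have h36 : 12 * s * S ≤ 36 * s^3 := by nlinarith
    linarith
  exact hfinal

/-- For strictly upper triangular `X`, the eigenvalues `λᵢ` of `(I+X)ᵀ(I+X)` satisfy
`∑ (log λᵢ)² = 2‖X‖_F² + O(‖X‖_F³)` as `X → 0`. -/
theorem stmt3 (n : ℕ) (hn : 1 ≤ n) :
    ∃ C r : ℝ, 0 < C ∧ 0 < r ∧
      ∀ X : Matrix (Fin n) (Fin n) ℝ,
        (∀ i j : Fin n, (j : ℕ) ≤ (i : ℕ) → X i j = 0) →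
        Real.sqrt (∑ i, ∑ j, X i j ^ 2) ≤ r →
        ∃ hA : ((1 + X)ᵀ * (1 + X)).IsHermitian,
          ((1 + X)ᵀ * (1 + X)).PosDef ∧
          |(∑ i, Real.log (hA.eigenvalues i) ^ 2) - 2 * ∑ i, ∑ j, X i j ^ 2|
            ≤ C * Real.sqrt (∑ i, ∑ j, X i j ^ 2) ^ 3 := by
  classical
  set C₁ : ℝ := (n:ℝ)^2 * (4*n + n^2) with hC₁
  have hC₁0 : 0 ≤ C₁ := by positivity
  refine ⟨C₁ + 36, min (1/4) (1/(C₁+1)), by positivity, by positivity, fun X hX hr => ?_⟩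
  have hPD := posdef_aux X hX
  refine ⟨hPD.isHermitian, hPD, ?_⟩
  set hA := hPD.isHermitian with hAdef
  set lam : Fin n → ℝ := hA.eigenvalues with hlam
  set t : ℝ := ∑ i, ∑ j, X i j ^ 2 with hts
  set s : ℝ := Real.sqrt t with hss
  have ht0 : 0 ≤ t := Finset.sum_nonneg fun i _ => Finset.sum_nonneg fun j _ => sq_nonneg _
  have hs0 : 0 ≤ s := Real.sqrt_nonneg _
  have hst : s^2 = t := Real.sq_sqrt ht0
  have hs14 : s ≤ 1/4 := le_trans hr (min_le_left _ _)
  have hs1 : s ≤ 1 := by linarith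
  have hsC : C₁ * s ≤ 1 := by
    have h2 : s ≤ 1/(C₁+1) := le_trans hr (min_le_right _ _)
    have : C₁ * s ≤ C₁ * (1/(C₁+1)) := mul_le_mul_of_nonneg_left h2 hC₁0
    have h3 : C₁ * (1/(C₁+1)) ≤ 1 := by
      rw [mul_one_div, div_le_one (by linarith)]; linarith
    linarith
  -- entry bound
  have hXb : ∀ i j, |X i j| ≤ s := by
    intro i j
    have h1 : X i j ^ 2 ≤ t := by
      calc X i j ^ 2 ≤ ∑ j', X i j' ^ 2 :=
            Finset.single_le_sum (f := fun j' => X i j' ^ 2)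
              (fun j' _ => sq_nonneg _) (Finset.mem_univ j)
        _ ≤ t := Finset.single_le_sum (f := fun i' => ∑ j', X i' j' ^ 2)
            (fun i' _ => Finset.sum_nonneg fun j' _ => sq_nonneg _) (Finset.mem_univ i)
    calc |X i j| = Real.sqrt (X i j ^ 2) := (Real.sqrt_sq_eq_abs _).symm
      _ ≤ s := Real.sqrt_le_sqrt h1
  -- matrix identity for M
  set M : Matrix (Fin n) (Fin n) ℝ := (1 + X)ᵀ * (1 + X) - 1 with hMdef
  have hMmat : M = X + Xᵀ + Xᵀ * X := by
    rw [hMdef, Matrix.transpose_add, Matrix.transpose_one]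
    noncomm_ring
  have hMent : ∀ i j, M i j = X i j + X j i + ∑ k, X k i * X k j := by
    intro i j
    rw [hMmat]
    simp [Matrix.add_apply, Matrix.transpose_apply, Matrix.mul_apply]
  have hMsymm : ∀ i j, M j i = M i j := by
    intro i j
    rw [hMent, hMent]
    have : ∑ k, X k j * X k i = ∑ k, X k i * X k j := by
      exact Finset.sum_congr rfl fun k _ => mul_comm _ _
    rw [this]; ring
  -- S : sum of (λ - 1)^2
  set S : ℝ := ∑ i, (lam i - 1)^2 with hSdef
  have hS0 : 0 ≤ S := Finset.sum_nonneg fun i _ => sq_nonneg _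
  have hStrace : S = ∑ i, ∑ j, (M i j)^2 := by
    have e0 := trace_sub_one_sq ((1 + X)ᵀ * (1 + X)) hA
    rw [hSdef, ← hlam] at *
    rw [← e0]
    rw [Matrix.trace]
    refine Finset.sum_congr rfl fun i _ => ?_
    rw [Matrix.diag_apply, Matrix.mul_apply]
    exact Finset.sum_congr rfl fun j _ => by rw [← hMdef, hMsymm i j, sq]
  -- bound |S - 2t|
  have hkey : |S - 2*t| ≤ C₁ * s^3 := by
    have hterm : ∀ i j : Fin n, |(M i j)^2 - (X i j)^2 - (X j i)^2| ≤ (4*n + n^2) * s^3 := by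
      intro i j
      have hP : |∑ k, X k i * X k j| ≤ n * s^2 := by
        calc |∑ k, X k i * X k j| ≤ ∑ k, |X k i * X k j| := Finset.abs_sum_le_sum_abs _ _
          _ ≤ ∑ _k : Fin n, s * s := Finset.sum_le_sum fun k _ => by
              rw [abs_mul]; exact mul_le_mul (hXb k i) (hXb k j) (abs_nonneg _) hs0
          _ = n * s^2 := by rw [Finset.sum_const, Finset.card_univ, Fintype.card_fin]; ring
      have hzero : X i j * X j i = 0 := by
        rcases le_or_gt (j:ℕ) (i:ℕ) with h | h
        · rw [hX i j h, zero_mul]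
        · rw [hX j i (le_of_lt h), mul_zero]
      have hexp : (M i j)^2 - (X i j)^2 - (X j i)^2
          = 2*(X i j + X j i)*(∑ k, X k i * X k j) + (∑ k, X k i * X k j)^2 := by
        rw [hMent]
        nlinarith [hzero]
      rw [hexp]
      have h1 : |2*(X i j + X j i)*(∑ k, X k i * X k j)| ≤ 2*(2*s)*(n*s^2) := by
        rw [abs_mul, abs_mul, abs_two]
        have ha : |X i j + X j i| ≤ 2*s := by
          calc |X i j + X j i| ≤ |X i j| + |X j i| := abs_add_le _ _
            _ ≤ 2*s := by have := hXb i j; have := hXb j i; linarith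
        have hmul := mul_le_mul ha hP (abs_nonneg _) (by linarith)
        calc 2 * |X i j + X j i| * |∑ k, X k i * X k j|
            = 2 * (|X i j + X j i| * |∑ k, X k i * X k j|) := by ring
          _ ≤ 2 * (2*s * (n*s^2)) := by linarith
          _ = 2*(2*s)*(n*s^2) := by ring
      have h2 : (∑ k, X k i * X k j)^2 ≤ (n*s^2)^2 := by
        rw [← sq_abs]
        exact pow_le_pow_left₀ (abs_nonneg _) hP 2
      have hn1 : (1:ℝ) ≤ n := by exact_mod_cast hn
      calc |2*(X i j + X j i)*(∑ k, X k i * X k j) + (∑ k, X k i * X k j)^2|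
          ≤ |2*(X i j + X j i)*(∑ k, X k i * X k j)| + |(∑ k, X k i * X k j)^2| := abs_add_le _ _
        _ ≤ 2*(2*s)*(n*s^2) + (n*s^2)^2 := by
            rw [abs_sq]; exact add_le_add h1 h2
        _ = 4*n*s^3 + n^2 * s^4 := by ring
        _ ≤ 4*n*s^3 + n^2 * s^3 := by
            have h4 : s^4 ≤ s^3 := by
              calc s^4 = s^3 * s := by ring
                _ ≤ s^3 * 1 := mul_le_mul_of_nonneg_left hs1 (pow_nonneg hs0 3)
                _ = s^3 := mul_one _
            have := mul_le_mul_of_nonneg_left h4 (by positivity : (0:ℝ) ≤ (n:ℝ)^2)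
            linarith
        _ = (4*n + n^2) * s^3 := by ring
    have hSsplit : S - 2*t = ∑ i, ∑ j, ((M i j)^2 - (X i j)^2 - (X j i)^2) := by
      have e : ∑ i, ∑ j, ((M i j)^2 - (X i j)^2 - (X j i)^2)
          = (∑ i, ∑ j, (M i j)^2) - (∑ i, ∑ j, (X i j)^2) - (∑ i, ∑ j, (X j i)^2) := by
        simp only [Finset.sum_sub_distrib]
      have e2 : (∑ i : Fin n, ∑ j : Fin n, (X j i)^2) = ∑ i, ∑ j, (X i j)^2 :=
        by rw [Finset.sum_comm]
      rw [e, e2, ← hStrace, ← hts]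
      ring
    rw [hSsplit]
    calc |∑ i, ∑ j, ((M i j)^2 - (X i j)^2 - (X j i)^2)|
        ≤ ∑ i, |∑ j, ((M i j)^2 - (X i j)^2 - (X j i)^2)| := Finset.abs_sum_le_sum_abs _ _
      _ ≤ ∑ i : Fin n, ∑ j : Fin n, |(M i j)^2 - (X i j)^2 - (X j i)^2| :=
          Finset.sum_le_sum fun i _ => Finset.abs_sum_le_sum_abs _ _
      _ ≤ ∑ _i : Fin n, ∑ _j : Fin n, (4*n + n^2) * s^3 :=
          Finset.sum_le_sum fun i _ => Finset.sum_le_sum fun j _ => hterm i j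
      _ = C₁ * s^3 := by
          simp only [Finset.sum_const, Finset.card_univ, Fintype.card_fin, nsmul_eq_mul]
          rw [hC₁]; ring
  exact final_est lam S t s C₁ hs0 hst hC₁0 hsC hs14 hSdef hkey
end

section
/- For $x_1,x_2\in\mathbb{R}$ let $N=\begin{pmatrix}1&x_1&x_2\\0&1&0\\0&0&1\end{pmatrix}$ and $s=x_1^2+x_2^2$. Then: (a) the characteristic polynomial of $N^{\top}N$ is $(X-1)\big(X^2-(2+s)X+1\big)$; (b) if $\lambda_1,\lambda_2,\lambda_3>0$ denote the eigenvalues of the symmetric positive definite matrix $N^{\top}N$ counted with multiplicity, then $\sum_{i=1}^{3}\big(\log\lambda_i\big)^2\ =\ 2\Big(\log\Big(1+\frac{s}{2}+\sqrt{s+\frac{s^2}{4}}\Big)\Big)^2$. -/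
open Real Matrix Polynomial

lemma myCharpolyConj {n R : Type*} [Fintype n] [DecidableEq n] [CommRing R]
    (U V A : Matrix n n R) (hUV : U * V = 1) :
    (U * A * V).charpoly = A.charpoly := by
  have hVU : V * U = 1 := mul_eq_one_comm.mp hUV
  have hmul : ∀ M₁ M₂ : Matrix n n R, (M₁ * M₂).map (C : R → R[X]) = M₁.map C * M₂.map C :=
    fun M₁ M₂ => Matrix.map_mul
  have hscalar : (Matrix.scalar n (X : R[X])) = (X : R[X]) • (1 : Matrix n n R[X]) := by
    simp [Matrix.scalar, smul_eq_diagonal_mul]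
  have hmat : charmatrix (U * A * V) = U.map C * charmatrix A * V.map C := by
    simp only [charmatrix, RingHom.mapMatrix_apply]
    rw [mul_sub, sub_mul, hscalar]
    congr 1
    · rw [mul_smul_comm, mul_one, smul_mul_assoc, ← hmul, hUV]
      simp
    · rw [hmul, hmul]
  rw [Matrix.charpoly, hmat, Matrix.det_mul, Matrix.det_mul, mul_comm, ← mul_assoc,
    ← Matrix.det_mul, ← hmul, hVU]
  simp [Matrix.charpoly]

lemma myCharpolyDiag {n R : Type*} [Fintype n] [DecidableEq n] [CommRing R] (d : n → R) :
    (Matrix.diagonal d).charpoly = ∏ i, (X - C (d i)) := by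
  rw [Matrix.charpoly]
  have : charmatrix (Matrix.diagonal d) = Matrix.diagonal fun i => (X : R[X]) - C (d i) := by
    ext i j
    by_cases h : i = j
    · subst h; simp [charmatrix_apply_eq]
    · simp [charmatrix_apply_ne _ _ _ h, Matrix.diagonal_apply_ne _ h, Matrix.diagonal_apply_ne d h]
  rw [this, Matrix.det_diagonal]

lemma myCharpolyHerm {n : Type*} [Fintype n] [DecidableEq n] {A : Matrix n n ℝ}
    (hA : A.IsHermitian) : A.charpoly = ∏ i, (X - C (hA.eigenvalues i)) := by
  conv_lhs => rw [hA.spectral_theorem]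
  rw [Unitary.conjStarAlgAut_apply]
  rw [myCharpolyConj _ _ _ (Matrix.mem_unitaryGroup_iff.mp (hA.eigenvectorUnitary).2)]
  rw [myCharpolyDiag]
  simp

/-- For `N = [[1,x₁,x₂],[0,1,0],[0,0,1]]` and `s = x₁² + x₂²`:
(a) the characteristic polynomial of `NᵀN` is `(X-1)(X²-(2+s)X+1)`;
(b) the eigenvalues `λᵢ` of the symmetric positive definite matrix `NᵀN` satisfy
`∑ (log λᵢ)² = 2 (log(1 + s/2 + √(s + s²/4)))²`. -/
theorem stmt5 (x₁ x₂ s : ℝ) (N : Matrix (Fin 3) (Fin 3) ℝ)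
    (hN : N = !![1, x₁, x₂; 0, 1, 0; 0, 0, 1])
    (hs : s = x₁ ^ 2 + x₂ ^ 2) :
    (Nᵀ * N).charpoly =
      (Polynomial.X - 1) * (Polynomial.X ^ 2 - Polynomial.C (2 + s) * Polynomial.X + 1) ∧
    ∃ hA : (Nᵀ * N).IsHermitian,
      (Nᵀ * N).PosDef ∧
      (∑ i, Real.log (hA.eigenvalues i) ^ 2)
        = 2 * Real.log (1 + s / 2 + Real.sqrt (s + s ^ 2 / 4)) ^ 2 := by
  have hs0 : 0 ≤ s := by rw [hs]; positivity
  -- explicit form of NᵀN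
  have hM : Nᵀ * N = !![1, x₁, x₂; x₁, 1+x₁^2, x₁*x₂; x₂, x₁*x₂, 1+x₂^2] := by
    have hT : Nᵀ = !![1, 0, 0; x₁, 1, 0; x₂, 0, 1] := by
      subst hN; ext i j; fin_cases i <;> fin_cases j <;> rfl
    rw [hT, hN, Matrix.mul_fin_three]
    ext i j; fin_cases i <;> fin_cases j <;> norm_num <;> ring
  -- part (a)
  have hcp : (Nᵀ * N).charpoly = (X - 1) * (X ^ 2 - C (2 + s) * X + 1) := by
    rw [hM, hs, Matrix.charpoly, Matrix.det_fin_three]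
    simp only [charmatrix_apply, Matrix.diagonal_apply, Matrix.cons_val', Matrix.cons_val_zero,
      Matrix.cons_val_one, Matrix.head_cons, Matrix.head_fin_const, Matrix.cons_val_fin_one,
      Matrix.empty_val', Matrix.of_apply, Matrix.cons_val_two, Matrix.tail_cons,
      show ((0:Fin 3) = 1) = False by simp, show ((0:Fin 3) = 2) = False by simp,
      show ((1:Fin 3) = 0) = False by simp, show ((1:Fin 3) = 2) = False by simp,
      show ((2:Fin 3) = 0) = False by simp, show ((2:Fin 3) = 1) = False by simp,
      if_false, if_true, eq_self_iff_true]
    simp only [map_add, _root_.map_mul, map_pow, _root_.map_one, map_ofNat]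
    ring
  refine ⟨hcp, ?_⟩
  -- positive definiteness
  have hPD : (Nᵀ * N).PosDef := by
    rw [Matrix.posDef_iff_dotProduct_mulVec]
    constructor
    · rw [hM]
      ext i j
      fin_cases i <;> fin_cases j <;> simp [Matrix.conjTranspose_apply]
    · intro x hx
      have hy : N *ᵥ x ≠ 0 := by
        intro h
        apply hx
        have h0 := congrFun h 0
        have h1 := congrFun h 1
        have h2 := congrFun h 2
        simp [hN, Matrix.mulVec, dotProduct, Fin.sum_univ_three] at h0 h1 h2
        funext i
        fin_cases i
        · show x 0 = 0; linear_combination h0 - x₁ * h1 - x₂ * h2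
        · exact h1
        · exact h2
      rw [← Matrix.mulVec_mulVec, Matrix.dotProduct_mulVec, Matrix.vecMul_transpose]
      have hsx : star x = x := by funext i; simp
      rw [hsx]
      obtain ⟨i, hi⟩ := Function.ne_iff.mp hy
      have : (N *ᵥ x) ⬝ᵥ (N *ᵥ x) = ∑ j, (N *ᵥ x) j * (N *ᵥ x) j := rfl
      rw [this]
      apply Finset.sum_pos' (fun j _ => mul_self_nonneg _)
      exact ⟨i, Finset.mem_univ i, mul_self_pos.mpr (by simpa using hi)⟩
  refine ⟨hPD.1, hPD, ?_⟩
  -- eigenvalue computation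
  set a : ℝ := Real.sqrt (s + s ^ 2 / 4) with ha
  set lam : ℝ := 1 + s / 2 + a with hlam
  set mu : ℝ := 1 + s / 2 - a with hmu
  have ha2 : a ^ 2 = s + s ^ 2 / 4 := Real.sq_sqrt (by positivity)
  have hprod : lam * mu = 1 := by rw [hlam, hmu]; nlinarith [ha2]
  have hsum : lam + mu = 2 + s := by rw [hlam, hmu]; ring
  have hquad : (X : ℝ[X]) ^ 2 - C (2 + s) * X + 1 = (X - C lam) * (X - C mu) := by
    have e1 : C (2 + s) = C lam + C mu := by rw [← hsum, map_add]
    have e2 : (1 : ℝ[X]) = C lam * C mu := by rw [← _root_.map_mul, hprod, _root_.map_one]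
    rw [e1, e2]; ring
  have hfact : (Nᵀ * N).charpoly
      = (Multiset.map (fun t : ℝ => X - C t) ({1, lam, mu} : Multiset ℝ)).prod := by
    rw [hcp, hquad]
    simp [Multiset.prod_cons]
  have hev : Multiset.map (hPD.1.eigenvalues) Finset.univ.val = ({1, lam, mu} : Multiset ℝ) := by
    have h1 : (Nᵀ * N).charpoly.roots = Multiset.map (hPD.1.eigenvalues) Finset.univ.val := by
      rw [myCharpolyHerm hPD.1, Finset.prod_eq_multiset_prod]
      rw [show Multiset.map (fun i => X - C (hPD.1.eigenvalues i)) Finset.univ.val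
          = Multiset.map (fun t : ℝ => X - C t)
              (Multiset.map hPD.1.eigenvalues Finset.univ.val) from
        (Multiset.map_map _ _ _).symm]
      exact roots_multiset_prod_X_sub_C _
    have h2 : (Nᵀ * N).charpoly.roots = ({1, lam, mu} : Multiset ℝ) := by
      rw [hfact, roots_multiset_prod_X_sub_C]
    rw [← h1, h2]
  have hsumEq : (∑ i, Real.log (hPD.1.eigenvalues i) ^ 2)
      = (Multiset.map (fun t : ℝ => Real.log t ^ 2)
          (Multiset.map (hPD.1.eigenvalues) Finset.univ.val)).sum := by
    rw [Multiset.map_map]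
    rfl
  rw [hsumEq, hev]
  have hlampos : 0 < lam := by
    rw [hlam]
    have : 0 ≤ a := Real.sqrt_nonneg _
    linarith
  have hprod' : mu * lam = 1 := by rw [mul_comm]; exact hprod
  have hmueq : mu = lam⁻¹ := eq_inv_of_mul_eq_one_right hprod
  simp [hmueq, Real.log_inv, Real.log_one]
  ring
end
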